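/- arXiv:2209.02979 — 2 statements merged into one kernel-verified Lean document; each statement's English description precedes it below -/
import Mathlib

section
/- Suppose a ℤ-graded module A carries a product μ of degree |μ| and coproduct λ of degree |λ| such that μ is graded-commutative (μτ = (-1)^{|μ|} μ) and λ is graded-cocommutative (τλ = (-1)^{|λ|} λ), and the unital infinitesimal relation holds: λμ = (-1)^{|λ||μ|}[(1⊗μ)(λ⊗1) + (μ⊗1)(1⊗λ)] - (-1)^{|μ|}(μ⊗μ)(1⊗λη⊗1) for a unit η of μ. Then the unital anti-symmetry relation holds, i.e. (-1)^{|μ|(|λ|+1)}(1⊗μ)(τλ⊗1) + (-1)^{|λ|(|μ|+1)}(μτ⊗1)(1⊗λ) - (-1)^{|λ|+|μ|}(μτ⊗μ)(1⊗λη⊗1) = (-1)^{|λ||μ|}τ(1⊗μτ)(λ⊗1) - (-1)^{(|λ|+1)(|μ|+1)}τ(μ⊗1)(1⊗τλ) - (-1)^{|μ|}τ(μ⊗μτ)(1⊗λη⊗1). -/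
open TensorProduct LinearMap
open scoped TensorProduct DirectSum

namespace GradedCoFrob

variable {R : Type} [CommRing R] {M : Type} [AddCommGroup M] [Module R M]

/-- The Koszul sign `(-1)^n` for `n : ℤ`. -/
def ksign (n : ℤ) : ℤ := (((-1 : ℤˣ) ^ n : ℤˣ) : ℤ)

variable (𝒜 : ℤ → Submodule R M) [DirectSum.Decomposition 𝒜]

/-- Build a linear map `M →ₗ N` out of its values on the homogeneous pieces,
bundled linearly in the family of values. -/
noncomputable def fromPiecesHom {N : Type} [AddCommGroup N] [Module R N] :
    (∀ i : ℤ, 𝒜 i →ₗ[R] N) →ₗ[R] (M →ₗ[R] N) :=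
  (LinearMap.lcomp R N (DirectSum.decomposeLinearEquiv 𝒜).toLinearMap).comp
    (DFinsupp.lsum R (M := fun i => 𝒜 i) (N := N)).toLinearMap

/-- Build a linear map `M →ₗ N` out of its values on the homogeneous pieces. -/
noncomputable def fromPieces {N : Type} [AddCommGroup N] [Module R N]
    (f : ∀ i : ℤ, 𝒜 i →ₗ[R] N) : M →ₗ[R] N :=
  fromPiecesHom 𝒜 f

/-- Build a bilinear map `M →ₗ M →ₗ N` out of its values on pairs of homogeneous pieces. -/
noncomputable def fromPieces₂ {N : Type} [AddCommGroup N] [Module R N]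
    (f : ∀ i j : ℤ, 𝒜 i →ₗ[R] 𝒜 j →ₗ[R] N) : M →ₗ[R] M →ₗ[R] N :=
  fromPieces 𝒜 (fun i => (fromPiecesHom 𝒜).comp (LinearMap.pi (fun j => f i j)))

/-- The operator multiplying the degree `i` component by the Koszul sign `(-1)^(d*i)`. -/
noncomputable def signAction (d : ℤ) : M →ₗ[R] M :=
  fromPieces 𝒜 (fun i => ksign (d * i) • (𝒜 i).subtype)

/-- The Koszul twist `τ(a ⊗ b) = (-1)^{|a||b|} b ⊗ a`. -/
noncomputable def twist : M ⊗[R] M →ₗ[R] M ⊗[R] M :=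
  TensorProduct.lift (fromPieces₂ 𝒜 (fun i j =>
    ksign (i * j) • ((((TensorProduct.mk R M M).flip).comp (𝒜 i).subtype).compl₂
      (𝒜 j).subtype)))

/-- Left contraction `(f ⊗ 1)(x ⊗ y) = f(x) • y` (no Koszul sign since `1` has degree `0`). -/
noncomputable def contrL {N : Type} [AddCommGroup N] [Module R N]
    (f : N →ₗ[R] R) : N ⊗[R] M →ₗ[R] M :=
  TensorProduct.lift ((LinearMap.lsmul R M).comp f)

/-- Right contraction with Koszul sign:
`(1 ⊗ f)(x ⊗ y) = (-1)^{d|x|} f(y) • x` where `d` is the degree of `f`. -/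
noncomputable def contrR {N : Type} [AddCommGroup N] [Module R N]
    (f : N →ₗ[R] R) (d : ℤ) : M ⊗[R] N →ₗ[R] M :=
  TensorProduct.lift ((((LinearMap.lsmul R M).comp f).flip).comp (signAction 𝒜 d))

/-- Koszul-signed evaluation of a pair of functionals on a tensor:
`(x ⊗ y) ↦ f((-1)^{d₁|x|} x) * g((-1)^{d₂|y|} y)`. -/
noncomputable def ev2 (f g : M →ₗ[R] R) (d₁ d₂ : ℤ) : M ⊗[R] M →ₗ[R] R :=
  TensorProduct.lift (((LinearMap.mul R R).comp (f.comp (signAction 𝒜 d₁))).compl₂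
    (g.comp (signAction 𝒜 d₂)))

/-- The map `c⃗ : A^∨ → A`, `f ↦ (-1)^{|f||c|}(f ⊗ 1)c`, implemented by putting the sign
`(-1)^{dc |x|}` on the first tensor factor of the copairing `c` (of degree `dc`). -/
noncomputable def cvec (c : M ⊗[R] M) (dc : ℤ) : (M →ₗ[R] R) →ₗ[R] M :=
  (LinearMap.applyₗ ((LinearMap.rTensor M (signAction 𝒜 dc)) c)).comp
    ((TensorProduct.lift.equiv (RingHom.id R) M M M).toLinearMap.comp
      (LinearMap.llcomp R M R (M →ₗ[R] M) (LinearMap.lsmul R M)))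

/-- The operation `(1 ⊗ c ⊗ 1) : A ⊗ A → (A ⊗ A) ⊗ (A ⊗ A)`,
`a ⊗ b ↦ (-1)^{|c||a|} (a ⊗ c₁) ⊗ (c₂ ⊗ b)` for a copairing `c` of degree `dc`. -/
noncomputable def midIns (c : M ⊗[R] M) (dc : ℤ) :
    M ⊗[R] M →ₗ[R] (M ⊗[R] M) ⊗[R] (M ⊗[R] M) :=
  (TensorProduct.assoc R (M ⊗[R] M) M M).toLinearMap.comp
    (LinearMap.rTensor M
      (((TensorProduct.assoc R M M M).symm.toLinearMap).comp
        (((TensorProduct.mk R M (M ⊗[R] M)).flip c).comp (signAction 𝒜 dc))))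

/-- The Koszul-signed cyclic permutation `σ(a⊗b⊗c) = (-1)^{(|a|+|b|)|c|} c⊗a⊗b`. -/
noncomputable def cyc : (M ⊗[R] M) ⊗[R] M →ₗ[R] (M ⊗[R] M) ⊗[R] M :=
  (LinearMap.rTensor M (twist 𝒜)).comp
    ((TensorProduct.assoc R M M M).symm.toLinearMap.comp
      ((LinearMap.lTensor M (twist 𝒜)).comp (TensorProduct.assoc R M M M).toLinearMap))

/-- The submodule `A_i ⊗ A_j ⊆ A ⊗ A`. -/
noncomputable def tpiece (i j : ℤ) : Submodule R (M ⊗[R] M) :=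
  LinearMap.range (TensorProduct.map (𝒜 i).subtype (𝒜 j).subtype)

/-- The degree `k` part `⨁_{i+j=k} A_i ⊗ A_j` of `A ⊗ A`. -/
noncomputable def tgrade (k : ℤ) : Submodule R (M ⊗[R] M) :=
  ⨆ i : ℤ, tpiece 𝒜 i (k - i)

/-- A product is homogeneous of degree `d`. -/
def IsHomogProd (d : ℤ) (mu : M ⊗[R] M →ₗ[R] M) : Prop :=
  ∀ i j : ℤ, ∀ x ∈ 𝒜 i, ∀ y ∈ 𝒜 j, mu (x ⊗ₜ[R] y) ∈ 𝒜 (i + j + d)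

/-- A coproduct is homogeneous of degree `d`. -/
def IsHomogCoprod (d : ℤ) (lam : M →ₗ[R] M ⊗[R] M) : Prop :=
  ∀ k : ℤ, ∀ x ∈ 𝒜 k, lam x ∈ tgrade 𝒜 (k + d)

/-- A scalar-valued functional is homogeneous of degree `d`. -/
def IsHomogFun (d : ℤ) (f : M →ₗ[R] R) : Prop :=
  ∀ i : ℤ, i ≠ -d → ∀ x ∈ 𝒜 i, f x = 0

/-- A pairing is homogeneous of degree `d`. -/
def IsHomogPairing (d : ℤ) (p : M ⊗[R] M →ₗ[R] R) : Prop :=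
  ∀ i j : ℤ, i + j ≠ -d → ∀ x ∈ 𝒜 i, ∀ y ∈ 𝒜 j, p (x ⊗ₜ[R] y) = 0

end GradedCoFrob
namespace GradedCoFrob

/-- A unital coFrobenius bialgebra structure on a ℤ-graded module
(Definition `defi:coFrobenius-unital-bialgebra`), with all Koszul sign conventions explicit. -/
structure UnitalCoFrob (R : Type) [CommRing R] {M : Type} [AddCommGroup M] [Module R M]
    (𝒜 : ℤ → Submodule R M) [DirectSum.Decomposition 𝒜] where
  mu : M ⊗[R] M →ₗ[R] M
  lam : M →ₗ[R] M ⊗[R] M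
  unit : M
  dm : ℤ
  dl : ℤ
  mu_homog : IsHomogProd 𝒜 dm mu
  lam_homog : IsHomogCoprod 𝒜 dl lam
  unit_homog : unit ∈ 𝒜 (-dm)
  /-- graded associativity `μ(μ⊗1) = (-1)^{|μ|} μ(1⊗μ)` -/
  mu_assoc : mu.comp (LinearMap.rTensor M mu) =
    ksign dm • (mu.comp ((TensorProduct.map (signAction 𝒜 dm) mu).comp
      (TensorProduct.assoc R M M M).toLinearMap))
  /-- `(-1)^{|μ|} μ(η ⊗ 1) = 1` -/
  unit_left : ksign dm • (mu.comp ((TensorProduct.mk R M M) unit)) = LinearMap.id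
  /-- `μ(1 ⊗ η) = 1` -/
  unit_right : mu.comp (((TensorProduct.mk R M M).flip unit).comp (signAction 𝒜 (-dm))) =
    LinearMap.id
  cop : M ⊗[R] M
  /-- the copairing `c = (-1)^{|λ||μ|+|μ|} λη` -/
  cop_def : cop = ksign (dl * dm + dm) • lam unit
  /-- `λ = (1⊗μ)(c⊗1)` -/
  cofrob_left : lam = (TensorProduct.map (signAction 𝒜 dm) mu).comp
    ((TensorProduct.assoc R M M M).toLinearMap.comp (TensorProduct.mk R (M ⊗[R] M) M cop))
  /-- `λ = (-1)^{|μ|}(μ⊗1)(1⊗c)` -/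
  cofrob_right : lam = ksign dm • ((LinearMap.rTensor M mu).comp
    ((TensorProduct.assoc R M M M).symm.toLinearMap.comp
      (((TensorProduct.mk R M (M ⊗[R] M)).flip cop).comp (signAction 𝒜 (dl - dm)))))
  /-- `τc = (-1)^{|λ|} c` -/
  cop_symm : twist 𝒜 cop = ksign dl • cop

/-- A biunital coFrobenius bialgebra structure on a ℤ-graded module
(Definition `defi:biunital-coFrobenius-bialgebra`), with all Koszul sign conventions explicit. -/
structure BiunitalCoFrob (R : Type) [CommRing R] {M : Type} [AddCommGroup M] [Module R M]
    (𝒜 : ℤ → Submodule R M) [DirectSum.Decomposition 𝒜] where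
  mu : M ⊗[R] M →ₗ[R] M
  lam : M →ₗ[R] M ⊗[R] M
  unit : M
  counit : M →ₗ[R] R
  dm : ℤ
  dl : ℤ
  mu_homog : IsHomogProd 𝒜 dm mu
  lam_homog : IsHomogCoprod 𝒜 dl lam
  unit_homog : unit ∈ 𝒜 (-dm)
  counit_homog : IsHomogFun 𝒜 (-dl) counit
  mu_assoc : mu.comp (LinearMap.rTensor M mu) =
    ksign dm • (mu.comp ((TensorProduct.map (signAction 𝒜 dm) mu).comp
      (TensorProduct.assoc R M M M).toLinearMap))
  /-- graded coassociativity `(λ⊗1)λ = (-1)^{|λ|}(1⊗λ)λ` -/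
  lam_coassoc : (LinearMap.rTensor M lam).comp lam =
    ksign dl • ((TensorProduct.assoc R M M M).symm.toLinearMap.comp
      ((TensorProduct.map (signAction 𝒜 dl) lam).comp lam))
  unit_left : ksign dm • (mu.comp ((TensorProduct.mk R M M) unit)) = LinearMap.id
  unit_right : mu.comp (((TensorProduct.mk R M M).flip unit).comp (signAction 𝒜 (-dm))) =
    LinearMap.id
  /-- `(ε⊗1)λ = 1` -/
  counit_left : (contrL counit).comp lam = LinearMap.id
  /-- `(-1)^{|λ|}(1⊗ε)λ = 1` -/
  counit_right : ksign dl • ((contrR 𝒜 counit (-dl)).comp lam) = LinearMap.id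
  cop : M ⊗[R] M
  cop_def : cop = ksign (dl * dm + dm) • lam unit
  pr : M ⊗[R] M →ₗ[R] R
  /-- the pairing `p = (-1)^{|λ|} εμ` -/
  pr_def : pr = ksign dl • (counit.comp mu)
  cofrob_left : lam = (TensorProduct.map (signAction 𝒜 dm) mu).comp
    ((TensorProduct.assoc R M M M).toLinearMap.comp (TensorProduct.mk R (M ⊗[R] M) M cop))
  cofrob_right : lam = ksign dm • ((LinearMap.rTensor M mu).comp
    ((TensorProduct.assoc R M M M).symm.toLinearMap.comp
      (((TensorProduct.mk R M (M ⊗[R] M)).flip cop).comp (signAction 𝒜 (dl - dm)))))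
  /-- `μ = (-1)^{|μ||λ|+|λ|}(p⊗1)(1⊗λ)` -/
  cofrob_pr_left : mu = ksign (dm * dl + dl) • ((contrL pr).comp
    ((TensorProduct.assoc R M M M).symm.toLinearMap.comp
      (TensorProduct.map (signAction 𝒜 dl) lam)))
  /-- `μ = (-1)^{|μ||λ|}(1⊗p)(λ⊗1)` -/
  cofrob_pr_right : mu = ksign (dm * dl) • ((contrR 𝒜 pr (dm - dl)).comp
    ((TensorProduct.assoc R M M M).toLinearMap.comp (LinearMap.rTensor M lam)))
  cop_symm : twist 𝒜 cop = ksign dl • cop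
  /-- `pτ = (-1)^{|μ|} p` -/
  pr_symm : pr.comp (twist 𝒜) = ksign dm • pr

end GradedCoFrob

namespace GradedCoFrob


private lemma ksign_mul_ksign (a b : ℤ) : ksign a * ksign b = ksign (a + b) := by
  simp [ksign, ← Units.val_mul, zpow_add]

private lemma ksign_congr {a b : ℤ} (h : Even (a - b)) : ksign a = ksign b := by
  obtain ⟨k, hk⟩ := h
  have hab : a = b + 2 * k := by linarith
  subst hab
  simp [ksign, zpow_add, zpow_mul, show ((-1 : ℤˣ) ^ (2 : ℤ)) = 1 from by decide]

private lemma ksign_one : ksign 1 = -1 := by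
  simp [ksign]

private lemma ksign_neg_congr {a b : ℤ} (h : Odd (a - b)) : ksign a = -ksign b := by
  obtain ⟨k, hk⟩ := h
  rw [ksign_congr (a := a) (b := b + 1) ⟨k, by linarith⟩, ← ksign_mul_ksign, ksign_one]
  ring

private lemma tmap_smul_right {R M N P Q : Type} [CommRing R] [AddCommGroup M] [Module R M]
    [AddCommGroup N] [Module R N] [AddCommGroup P] [Module R P] [AddCommGroup Q] [Module R Q]
    (f : M →ₗ[R] N) (c : ℤ) (g : P →ₗ[R] Q) :
    TensorProduct.map f (c • g) = c • TensorProduct.map f g := by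
  ext x y
  simp [TensorProduct.tmul_smul]

private lemma tmap_smul_left {R M N P Q : Type} [CommRing R] [AddCommGroup M] [Module R M]
    [AddCommGroup N] [Module R N] [AddCommGroup P] [Module R P] [AddCommGroup Q] [Module R Q]
    (c : ℤ) (f : M →ₗ[R] N) (g : P →ₗ[R] Q) :
    TensorProduct.map (c • f) g = c • TensorProduct.map f g := by
  ext x y
  simp [TensorProduct.smul_tmul']

private lemma rT_smul {R M N P : Type} [CommRing R] [AddCommGroup M] [Module R M]
    [AddCommGroup N] [Module R N] [AddCommGroup P] [Module R P] (c : ℤ) (f : M →ₗ[R] N) :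
    LinearMap.rTensor P (c • f) = c • LinearMap.rTensor P f := by
  ext x y
  simp [TensorProduct.smul_tmul']

private lemma comp_zsmul {R M N P : Type} [CommRing R] [AddCommGroup M] [Module R M]
    [AddCommGroup N] [Module R N] [AddCommGroup P] [Module R P]
    (g : N →ₗ[R] P) (c : ℤ) (f : M →ₗ[R] N) :
    g.comp (c • f) = c • g.comp f := by
  ext x
  simp

private lemma zsmul_comp {R M N P : Type} [CommRing R] [AddCommGroup M] [Module R M]
    [AddCommGroup N] [Module R N] [AddCommGroup P] [Module R P]
    (c : ℤ) (g : N →ₗ[R] P) (f : M →ₗ[R] N) :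
    (c • g).comp f = c • g.comp f := by
  ext x
  simp

/-- If a graded module carries a graded-commutative product `μ` with unit `η`
and a graded-cocommutative coproduct `λ` satisfying the unital infinitesimal relation
`λμ = (-1)^{|λ||μ|}[(1⊗μ)(λ⊗1) + (μ⊗1)(1⊗λ)] - (-1)^{|μ|}(μ⊗μ)(1⊗λη⊗1)`,
then the unital anti-symmetry relation holds. -/
theorem comm_cocomm_implies_antisymmetry {R : Type} [CommRing R] {M : Type}
    [AddCommGroup M] [Module R M] (𝒜 : ℤ → Submodule R M) [DirectSum.Decomposition 𝒜]
    (mu : M ⊗[R] M →ₗ[R] M) (lam : M →ₗ[R] M ⊗[R] M) (eta : M) (dm dl : ℤ)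
    (hmu : IsHomogProd 𝒜 dm mu) (hlam : IsHomogCoprod 𝒜 dl lam)
    (heta : eta ∈ 𝒜 (-dm))
    -- η is a unit: (-1)^{|μ|}μ(η⊗1) = 1 = μ(1⊗η)
    (hunitL : ksign dm • (mu.comp ((TensorProduct.mk R M M) eta)) = LinearMap.id)
    (hunitR : mu.comp (((TensorProduct.mk R M M).flip eta).comp (signAction 𝒜 (-dm))) =
      LinearMap.id)
    -- μ commutative: μτ = (-1)^{|μ|}μ
    (hcomm : mu.comp (twist 𝒜) = ksign dm • mu)
    -- λ cocommutative: τλ = (-1)^{|λ|}λ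
    (hcocomm : (twist 𝒜).comp lam = ksign dl • lam)
    -- unital infinitesimal relation
    (hinf : lam.comp mu =
      ksign (dl * dm) •
        ((TensorProduct.map (signAction 𝒜 dm) mu).comp
          ((TensorProduct.assoc R M M M).toLinearMap.comp (LinearMap.rTensor M lam))
        + (LinearMap.rTensor M mu).comp
          ((TensorProduct.assoc R M M M).symm.toLinearMap.comp
            (TensorProduct.map (signAction 𝒜 dl) lam)))
      - ksign dm •
        ((TensorProduct.map
            (mu.comp (TensorProduct.map (signAction 𝒜 dm) (signAction 𝒜 dm))) mu).comp
          (midIns 𝒜 (lam eta) (dl - dm)))) :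
    -- unital anti-symmetry
    ksign (dm * (dl + 1)) •
      ((TensorProduct.map (signAction 𝒜 dm) mu).comp
        ((TensorProduct.assoc R M M M).toLinearMap.comp
          (LinearMap.rTensor M ((twist 𝒜).comp lam))))
    + ksign (dl * (dm + 1)) •
      ((LinearMap.rTensor M (mu.comp (twist 𝒜))).comp
        ((TensorProduct.assoc R M M M).symm.toLinearMap.comp
          (TensorProduct.map (signAction 𝒜 dl) lam)))
    - ksign (dl + dm) •
      ((TensorProduct.map
          ((mu.comp (twist 𝒜)).comp
            (TensorProduct.map (signAction 𝒜 dm) (signAction 𝒜 dm))) mu).comp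
        (midIns 𝒜 (lam eta) (dl - dm)))
    = ksign (dl * dm) •
        ((twist 𝒜).comp ((TensorProduct.map (signAction 𝒜 dm) (mu.comp (twist 𝒜))).comp
          ((TensorProduct.assoc R M M M).toLinearMap.comp (LinearMap.rTensor M lam))))
      - ksign ((dl + 1) * (dm + 1)) •
        ((twist 𝒜).comp ((LinearMap.rTensor M mu).comp
          ((TensorProduct.assoc R M M M).symm.toLinearMap.comp
            (TensorProduct.map (signAction 𝒜 dl) ((twist 𝒜).comp lam)))))
      - ksign dm •
        ((twist 𝒜).comp ((TensorProduct.map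
            (mu.comp (TensorProduct.map (signAction 𝒜 dm) (signAction 𝒜 dm)))
            (mu.comp (twist 𝒜))).comp
          (midIns 𝒜 (lam eta) (dl - dm)))) := by
  have hτL : (twist 𝒜).comp (lam.comp mu) = ksign dl • (lam.comp mu) := by
    rw [← LinearMap.comp_assoc, hcocomm, LinearMap.smul_comp]
  rw [hcomm, hcocomm]
  simp only [tmap_smul_right, tmap_smul_left, rT_smul, comp_zsmul, zsmul_comp, smul_smul,
    ksign_mul_ksign]
  trans (ksign (dl + dm) • (lam.comp mu))
  · rw [hinf]
    simp only [smul_add, smul_sub, smul_smul, ksign_mul_ksign]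
    rw [ksign_congr (a := dm * (dl + 1) + dl) (b := dl + dm + dl * dm) ⟨0, by ring⟩,
      ksign_congr (a := dl * (dm + 1) + dm) (b := dl + dm + dl * dm) ⟨0, by ring⟩]
  · have h2 : ksign (dl + dm) • (lam.comp mu) =
        ksign dm • ((twist 𝒜).comp (lam.comp mu)) := by
      rw [hτL, smul_smul, ksign_mul_ksign, add_comm dm dl]
    rw [h2, hinf]
    simp only [LinearMap.comp_sub, LinearMap.comp_add, comp_zsmul, smul_sub, smul_add,
      smul_smul, ksign_mul_ksign]
    match_scalars
    · rw [mul_one, mul_one]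
      exact ksign_congr ⟨0, by ring⟩
    · rw [mul_one, mul_one]
      exact ksign_neg_congr ⟨-dl - 1, by ring⟩
    · rfl

end GradedCoFrob
end

section
/- In a biunital coFrobenius bialgebra (A, μ, λ, η, ε), the pairing p = (-1)^{|λ|}εμ and copairing c = (-1)^{|λ||μ|+|μ|}λη satisfy the snake relations (1⊗p)(c⊗1) = (-1)^{|λ|+|μ|}(p⊗1)(1⊗c) = 1; consequently p and c are perfect. -/
open TensorProduct LinearMap
open scoped TensorProduct DirectSum

namespace GradedCoFrob

section AuxLemmas

lemma ksign_even {a : ℤ} (h : Even a) : ksign a = 1 := by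
  unfold ksign; rw [h.neg_one_zpow]; rfl

lemma ksign_odd {a : ℤ} (h : Odd a) : ksign a = -1 := by
  obtain ⟨k, rfl⟩ := h
  unfold ksign
  rw [zpow_add, zpow_mul]
  norm_num

lemma ksign_eq (a : ℤ) : ksign a = if Even a then 1 else -1 := by
  split_ifs with h
  · exact ksign_even h
  · exact ksign_odd (Int.not_even_iff_odd.mp h)

lemma ksign_add (a b : ℤ) : ksign (a + b) = ksign a * ksign b := by
  simp only [ksign_eq]
  by_cases ha : Even a <;> by_cases hb : Even b <;> simp [Int.even_add, *]

lemma ksign_mul_self (a : ℤ) : ksign a * ksign a = 1 := by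
  simp only [ksign_eq]; split_ifs <;> norm_num

lemma ksign_neg (a : ℤ) : ksign (-a) = ksign a := by
  simp only [ksign_eq, even_neg]

lemma ksign_sq (a : ℤ) : ksign (a * a) = ksign a := by
  simp only [ksign_eq, Int.even_mul, or_self]

variable {R : Type} [CommRing R] {M : Type} [AddCommGroup M] [Module R M]
variable (𝒜 : ℤ → Submodule R M) [DirectSum.Decomposition 𝒜]

lemma homog_ext {N : Type} [AddCommGroup N] [Module R N] {f g : M →ₗ[R] N}
    (h : ∀ (i : ℤ) (x : M), x ∈ 𝒜 i → f x = g x) : f = g := by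
  classical
  ext x
  rw [← DirectSum.sum_support_decompose 𝒜 x, map_sum, map_sum]
  exact Finset.sum_congr rfl fun i _ => h i _ (DirectSum.decompose 𝒜 x i).2

lemma signAction_of_mem {i d : ℤ} {x : M} (hx : x ∈ 𝒜 i) :
    signAction 𝒜 d x = ksign (d * i) • x := by
  simp only [signAction, fromPieces, fromPiecesHom, LinearMap.comp_apply,
    LinearEquiv.coe_coe, LinearMap.lcomp_apply, DirectSum.decomposeLinearEquiv_apply,
    DirectSum.decompose_of_mem _ hx]
  erw [DFinsupp.lsum_single]
  simp

lemma signAction_signAction (a b : ℤ) (x : M) :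
    signAction 𝒜 a (signAction 𝒜 b x) = signAction 𝒜 (a + b) x := by
  have : (signAction 𝒜 a).comp (signAction 𝒜 b) = signAction 𝒜 (a + b) := by
    apply homog_ext 𝒜
    intro i x hx
    simp only [LinearMap.comp_apply, signAction_of_mem 𝒜 hx, map_zsmul,
      signAction_of_mem 𝒜 hx]
    rw [smul_smul, ← ksign_add, ← add_mul, add_comm b a]
  exact DFunLike.congr_fun this x

lemma signAction_neg (a : ℤ) : signAction 𝒜 (-a) = signAction 𝒜 a := by
  apply homog_ext 𝒜
  intro i x hx
  rw [signAction_of_mem 𝒜 hx, signAction_of_mem 𝒜 hx, neg_mul, ksign_neg]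

lemma contrR_tmul {N : Type} [AddCommGroup N] [Module R N]
    (f : N →ₗ[R] R) (d : ℤ) (x : M) (n : N) :
    contrR 𝒜 f d (x ⊗ₜ[R] n) = f n • signAction 𝒜 d x := by
  simp [contrR]

lemma contrL_tmul {N : Type} [AddCommGroup N] [Module R N]
    (f : N →ₗ[R] R) (n : N) (y : M) :
    contrL (M := M) f (n ⊗ₜ[R] y) = f n • y := by
  simp [contrL]

lemma contrL_zsmul {N : Type} [AddCommGroup N] [Module R N]
    (k : ℤ) (f : N →ₗ[R] R) :
    contrL (M := M) (k • f) = k • contrL (M := M) f := by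
  apply TensorProduct.ext'
  intro n y
  simp [contrL]
  rw [mul_smul, Int.cast_smul_eq_zsmul]

lemma comp_zsmul' {A B C : Type} [AddCommGroup A] [Module R A] [AddCommGroup B] [Module R B]
    [AddCommGroup C] [Module R C] (f : B →ₗ[R] C) (k : ℤ) (g : A →ₗ[R] B) :
    f.comp (k • g) = k • f.comp g := by
  ext x; simp

lemma cvec_apply (c : M ⊗[R] M) (dc : ℤ) (f : M →ₗ[R] R) :
    cvec 𝒜 c dc f = TensorProduct.lift ((LinearMap.lsmul R M).comp f)
      (LinearMap.rTensor M (signAction 𝒜 dc) c) := by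
  simp only [cvec, LinearMap.comp_apply, LinearEquiv.coe_coe]
  have h : (TensorProduct.lift.equiv (RingHom.id R) M M M)
      ((LinearMap.llcomp R M R (M →ₗ[R] M)) (LinearMap.lsmul R M) f)
      = TensorProduct.lift ((LinearMap.lsmul R M).comp f) :=
    TensorProduct.ext' fun m n => by simp [TensorProduct.lift.equiv_apply]
  rw [h]
  rfl

lemma cvec_tmul (u v : M) (dc : ℤ) (f : M →ₗ[R] R) :
    cvec 𝒜 (u ⊗ₜ[R] v) dc f = f (signAction 𝒜 dc u) • v := by
  simp [cvec_apply]

lemma pr_homog (B : BiunitalCoFrob R 𝒜) {i j : ℤ} (hij : i + j ≠ B.dl - B.dm)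
    {x y : M} (hx : x ∈ 𝒜 i) (hy : y ∈ 𝒜 j) : B.pr (x ⊗ₜ[R] y) = 0 := by
  rw [B.pr_def]
  simp only [LinearMap.smul_apply, LinearMap.comp_apply]
  rw [B.counit_homog (i + j + B.dm) (by omega) _ (B.mu_homog i j x hx y hy), smul_zero]

lemma pr_transfer (B : BiunitalCoFrob R 𝒜) (x y : M) :
    B.pr (signAction 𝒜 (B.dl - B.dm) x ⊗ₜ[R] y) =
      ksign (B.dl + B.dm) • B.pr (x ⊗ₜ[R] signAction 𝒜 (B.dl - B.dm) y) := by
  have key : ((TensorProduct.curry B.pr).comp (signAction 𝒜 (B.dl - B.dm))) =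
      ksign (B.dl + B.dm) •
        (((TensorProduct.curry B.pr).flip.comp (signAction 𝒜 (B.dl - B.dm))).flip) := by
    apply homog_ext 𝒜
    intro i x hx
    apply homog_ext 𝒜
    intro j y hy
    simp only [LinearMap.comp_apply, LinearMap.flip_apply, LinearMap.smul_apply,
      TensorProduct.curry_apply]
    rw [signAction_of_mem 𝒜 hx, signAction_of_mem 𝒜 hy]
    rw [← TensorProduct.smul_tmul', TensorProduct.tmul_smul, map_zsmul, map_zsmul]
    by_cases hij : i + j = B.dl - B.dm
    · have hi : i = (B.dl - B.dm) - j := by omega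
      rw [hi]
      rw [show (B.dl - B.dm) * ((B.dl - B.dm) - j) =
        (B.dl - B.dm) * (B.dl - B.dm) + (-((B.dl - B.dm) * j)) by ring]
      rw [ksign_add, ksign_neg, ksign_sq]
      rw [show B.dl - B.dm = B.dl + -B.dm by ring, ksign_add, ksign_neg (B.dm), ← ksign_add,
        mul_smul]
    · rw [pr_homog 𝒜 B hij hx hy]
      simp
  have := DFunLike.congr_fun (DFunLike.congr_fun key x) y
  simpa using this

end AuxLemmas


/-- In a biunital coFrobenius bialgebra `(A,μ,λ,η,ε)` the pairing
`p = (-1)^{|λ|}εμ` and copairing `c = (-1)^{|λ||μ|+|μ|}λη` satisfy the snake relations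
`(1⊗p)(c⊗1) = (-1)^{|λ|+|μ|}(p⊗1)(1⊗c) = 1`; consequently `p` and `c` are perfect. -/
theorem biunital_coFrobenius_snake {R : Type} [CommRing R] {M : Type} [AddCommGroup M]
    [Module R M] [Module.Free R M] [Module.Finite R M]
    (𝒜 : ℤ → Submodule R M) [DirectSum.Decomposition 𝒜]
    (B : BiunitalCoFrob R 𝒜) :
    -- (1⊗p)(c⊗1) = (-1)^{|λ|+|μ|}(p⊗1)(1⊗c)
    ((contrR 𝒜 B.pr (B.dm - B.dl)).comp
        ((TensorProduct.assoc R M M M).toLinearMap.comp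
          (TensorProduct.mk R (M ⊗[R] M) M B.cop))
      = ksign (B.dl + B.dm) • ((contrL B.pr).comp
        ((TensorProduct.assoc R M M M).symm.toLinearMap.comp
          (((TensorProduct.mk R M (M ⊗[R] M)).flip B.cop).comp
            (signAction 𝒜 (B.dl - B.dm)))))) ∧
    -- (1⊗p)(c⊗1) = 1
    ((contrR 𝒜 B.pr (B.dm - B.dl)).comp
        ((TensorProduct.assoc R M M M).toLinearMap.comp
          (TensorProduct.mk R (M ⊗[R] M) M B.cop)) = LinearMap.id) ∧
    -- perfectness
    (Function.Bijective (TensorProduct.curry B.pr) ∧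
      Function.Bijective (cvec 𝒜 B.cop (B.dl - B.dm))) := by
  classical
  -- abbreviations
  have hεμ : B.counit.comp B.mu = ksign B.dl • B.pr := by
    rw [B.pr_def, smul_smul, ksign_mul_self, one_smul]
  have hkey1 : contrR 𝒜 B.pr (B.dm - B.dl) =
      ksign B.dl • ((contrR 𝒜 B.counit (-B.dl)).comp
        (TensorProduct.map (signAction 𝒜 B.dm) B.mu)) := by
    apply TensorProduct.ext'
    intro x n
    simp only [LinearMap.comp_apply, LinearMap.smul_apply, TensorProduct.map_tmul,
      contrR_tmul]
    rw [signAction_signAction, neg_add_eq_sub]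
    have hn := DFunLike.congr_fun hεμ n
    simp only [LinearMap.comp_apply, LinearMap.smul_apply] at hn
    rw [hn, smul_assoc, smul_smul, ksign_mul_self, one_smul]
  have hS1 : (contrR 𝒜 B.pr (B.dm - B.dl)).comp
      ((TensorProduct.assoc R M M M).toLinearMap.comp
        (TensorProduct.mk R (M ⊗[R] M) M B.cop)) = LinearMap.id := by
    rw [hkey1, LinearMap.smul_comp, LinearMap.comp_assoc, ← B.cofrob_left]
    exact B.counit_right
  have hkey2 : (contrL (M := M) B.counit).comp (LinearMap.rTensor M B.mu)
      = contrL (B.counit.comp B.mu) := by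
    apply TensorProduct.ext'
    intro n y
    simp [contrL]
  have hS2 : (LinearMap.id : M →ₗ[R] M) = ksign (B.dl + B.dm) • ((contrL B.pr).comp
      ((TensorProduct.assoc R M M M).symm.toLinearMap.comp
        (((TensorProduct.mk R M (M ⊗[R] M)).flip B.cop).comp
          (signAction 𝒜 (B.dl - B.dm))))) := by
    conv_lhs => rw [← B.counit_left, B.cofrob_right]
    rw [comp_zsmul', ← LinearMap.comp_assoc, hkey2, hεμ, contrL_zsmul,
      LinearMap.smul_comp, smul_smul, ← ksign_add, add_comm B.dm B.dl]
  have hsub : B.dm - B.dl = -(B.dl - B.dm) := by ring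
  have hφψ : (TensorProduct.curry B.pr).comp (cvec 𝒜 B.cop (B.dl - B.dm))
      = LinearMap.id := by
    refine LinearMap.ext fun f => LinearMap.ext fun y => ?_
    simp only [LinearMap.comp_apply, LinearMap.id_apply, TensorProduct.curry_apply,
      LinearMap.id_coe, id_eq]
    have h1 := DFunLike.congr_fun hS1 y
    simp only [LinearMap.comp_apply, LinearMap.id_apply, LinearEquiv.coe_coe,
      TensorProduct.mk_apply, LinearMap.id_coe, id_eq] at h1
    conv_rhs => rw [← h1]
    generalize B.cop = c
    induction c using TensorProduct.induction_on with
    | zero => simp [cvec_apply]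
    | tmul u v =>
      rw [cvec_tmul]
      simp only [TensorProduct.assoc_tmul]
      rw [contrR_tmul, hsub, signAction_neg, map_smul, ← TensorProduct.smul_tmul',
        map_smul]
      rw [smul_eq_mul, smul_eq_mul, mul_comm]
    | add c₁ c₂ ih₁ ih₂ =>
      rw [cvec_apply] at ih₁ ih₂ ⊢
      simp only [map_add, TensorProduct.add_tmul, LinearMap.add_apply]
      rw [ih₁, ih₂]
  have hψφ : (cvec 𝒜 B.cop (B.dl - B.dm)).comp (TensorProduct.curry B.pr)
      = LinearMap.id := by
    refine LinearMap.ext fun x => ?_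
    simp only [LinearMap.comp_apply, LinearMap.id_coe, id_eq]
    have h2 := DFunLike.congr_fun hS2 x
    simp only [LinearMap.comp_apply, LinearMap.id_apply, LinearMap.smul_apply,
      LinearEquiv.coe_coe, LinearMap.flip_apply, TensorProduct.mk_apply,
      LinearMap.id_coe, id_eq] at h2
    conv_rhs => rw [h2]
    generalize B.cop = c
    induction c using TensorProduct.induction_on with
    | zero => simp [cvec_apply]
    | tmul u v =>
      rw [cvec_tmul]
      simp only [TensorProduct.assoc_symm_tmul]
      rw [contrL_tmul]
      rw [pr_transfer 𝒜 B x u]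
      rw [TensorProduct.curry_apply]
      rw [smul_assoc, smul_smul, ksign_mul_self, one_smul]
    | add c₁ c₂ ih₁ ih₂ =>
      rw [cvec_apply] at ih₁ ih₂ ⊢
      simp only [map_add, TensorProduct.tmul_add, LinearMap.add_apply, smul_add]
      rw [ih₁, ih₂]
  refine ⟨?_, hS1, ?_, ?_⟩
  · rw [hS1]
    exact hS2
  · have l : Function.LeftInverse (cvec 𝒜 B.cop (B.dl - B.dm))
        (TensorProduct.curry B.pr) := fun x => DFunLike.congr_fun hψφ x
    have r : Function.RightInverse (cvec 𝒜 B.cop (B.dl - B.dm))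
        (TensorProduct.curry B.pr) := fun f => DFunLike.congr_fun hφψ f
    exact ⟨l.injective, r.surjective⟩
  · have l : Function.LeftInverse (TensorProduct.curry B.pr)
        (cvec 𝒜 B.cop (B.dl - B.dm)) := fun f => DFunLike.congr_fun hφψ f
    have r : Function.RightInverse (TensorProduct.curry B.pr)
        (cvec 𝒜 B.cop (B.dl - B.dm)) := fun x => DFunLike.congr_fun hψφ x
    exact ⟨l.injective, r.surjective⟩


end GradedCoFrob
end
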